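/- Let k, m, n be non-negative integers with k ≤ n ≤ m + k. The number of monotone lattice paths from (0,0) to (m,n) — encoded as sequences of m right-steps and n up-steps, i.e., functions from Fin (m+n) to {R, U} with exactly n up-steps — that touch the line y = x + k (i.e., have some prefix in which the number of up-steps equals the number of right-steps plus k) equals C(m+n, n−k). -/

import Mathlib

open Finset

/-- A monotone lattice path with `m` right-steps and `n` up-steps, encoded as a word
`w : Fin (m+n) → Bool` (`true` = up-step, `false` = right-step), touches the line
`y = x + k` if some prefix contains exactly `k` more up-steps than right-steps. -/
def TouchesLine (m n k : ℕ) (w : Fin (m + n) → Bool) : Prop :=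
  ∃ i : ℕ, i ≤ m + n ∧
    (Finset.univ.filter (fun j : Fin (m + n) => (j : ℕ) < i ∧ w j = true)).card
      = (Finset.univ.filter (fun j : Fin (m + n) => (j : ℕ) < i ∧ w j = false)).card + k

namespace ReflAux

variable {N : ℕ}

/-- indicator of position `j` being a `b`-step (0 outside range). -/
def ind (w : Fin N → Bool) (b : Bool) (j : ℕ) : ℕ :=
  if h : j < N then (if w ⟨j, h⟩ = b then 1 else 0) else 0

/-- number of `b`-steps among the first `i` positions. -/
def cnt (w : Fin N → Bool) (b : Bool) (i : ℕ) : ℕ := ∑ j ∈ Finset.range i, ind w b j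

lemma cnt_eq_card (w : Fin N → Bool) (b : Bool) {i : ℕ} (hi : i ≤ N) :
    (Finset.univ.filter (fun j : Fin N => (j : ℕ) < i ∧ w j = b)).card = cnt w b i := by
  rw [Finset.card_filter]
  have h1 : ∀ j : Fin N, (if ((j : ℕ) < i ∧ w j = b) then (1:ℕ) else 0)
      = (fun x : ℕ => if x < i then ind w b x else 0) (j : ℕ) := by
    intro j
    simp only [ind, j.isLt, dif_pos, Fin.eta]
    by_cases h : (j:ℕ) < i <;> by_cases h' : w j = b <;> simp [h, h']
  calc ∑ j : Fin N, (if ((j : ℕ) < i ∧ w j = b) then (1:ℕ) else 0)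
      = ∑ j : Fin N, (fun x : ℕ => if x < i then ind w b x else 0) (j : ℕ) :=
        Finset.sum_congr rfl (fun j _ => h1 j)
    _ = ∑ x ∈ Finset.range N, (if x < i then ind w b x else 0) :=
        Fin.sum_univ_eq_sum_range (fun x : ℕ => if x < i then ind w b x else 0) N
    _ = ∑ x ∈ (Finset.range N).filter (· < i), ind w b x := (Finset.sum_filter _ _).symm
    _ = cnt w b i := by
        rw [cnt]; congr 1; ext x; simp only [mem_filter, mem_range]; omega

lemma card_true_eq_cnt (w : Fin N → Bool) (b : Bool) :
    (Finset.univ.filter (fun j : Fin N => w j = b)).card = cnt w b N := by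
  rw [← cnt_eq_card w b (le_refl N)]
  congr 1; ext j; simp [j.isLt]

lemma cnt_succ (w : Fin N → Bool) (b : Bool) (i : ℕ) :
    cnt w b (i+1) = cnt w b i + ind w b i := Finset.sum_range_succ _ _

lemma ind_le_one (w : Fin N → Bool) (b : Bool) (j : ℕ) : ind w b j ≤ 1 := by
  unfold ind; split <;> [skip; omega]; split <;> omega

lemma ind_add (w : Fin N → Bool) {j : ℕ} (hj : j < N) :
    ind w true j + ind w false j = 1 := by
  unfold ind
  rw [dif_pos hj, dif_pos hj]
  cases w ⟨j, hj⟩ <;> simp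

lemma cnt_add (w : Fin N → Bool) {i : ℕ} (hi : i ≤ N) :
    cnt w true i + cnt w false i = i := by
  unfold cnt
  rw [← Finset.sum_add_distrib]
  rw [Finset.sum_congr rfl (fun j hj => ind_add w (by
    simp only [mem_range] at hj; omega))]
  simp

/-- flip the first `i` letters of a word. -/
def flipT (i : ℕ) (w : Fin N → Bool) : Fin N → Bool :=
  fun j => if (j : ℕ) < i then !(w j) else w j

lemma flipT_flipT (i : ℕ) (w : Fin N → Bool) : flipT i (flipT i w) = w := by
  funext j; unfold flipT; by_cases h : (j:ℕ) < i <;> simp [h]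

lemma ind_flip_lt (i : ℕ) (w : Fin N → Bool) (b : Bool) {j : ℕ} (hj : j < i) :
    ind (flipT i w) b j = ind w (!b) j := by
  unfold ind flipT
  by_cases h : j < N
  · rw [dif_pos h, dif_pos h]
    have hc : ((⟨j, h⟩ : Fin N) : ℕ) < i := hj
    rw [if_pos hc]
    cases b <;> cases w ⟨j, h⟩ <;> simp
  · rw [dif_neg h, dif_neg h]

lemma ind_flip_ge (i : ℕ) (w : Fin N → Bool) (b : Bool) {j : ℕ} (hj : i ≤ j) :
    ind (flipT i w) b j = ind w b j := by
  unfold ind flipT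
  by_cases h : j < N
  · rw [dif_pos h, dif_pos h]
    have hc : ¬ ((⟨j, h⟩ : Fin N) : ℕ) < i := Nat.not_lt.mpr hj
    rw [if_neg hc]
  · rw [dif_neg h, dif_neg h]

lemma cnt_flip_le (i : ℕ) (w : Fin N → Bool) (b : Bool) {l : ℕ} (hl : l ≤ i) :
    cnt (flipT i w) b l = cnt w (!b) l := by
  unfold cnt
  exact Finset.sum_congr rfl (fun j hj => ind_flip_lt i w b (by
    simp only [mem_range] at hj; omega))

lemma cnt_flip_ge (i : ℕ) (w : Fin N → Bool) (b : Bool) {l : ℕ} (hl : i ≤ l) :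
    cnt (flipT i w) b l + cnt w b i = cnt w (!b) i + cnt w b l := by
  have split : ∀ (v : Fin N → Bool), cnt v b l = cnt v b i + ∑ j ∈ Finset.Ico i l, ind v b j := by
    intro v
    unfold cnt
    rw [Finset.range_eq_Ico, Finset.range_eq_Ico]
    exact (Finset.sum_Ico_consecutive (fun j => ind v b j) (Nat.zero_le i) hl).symm
  have hmid : ∑ j ∈ Finset.Ico i l, ind (flipT i w) b j = ∑ j ∈ Finset.Ico i l, ind w b j :=
    Finset.sum_congr rfl (fun j hj => ind_flip_ge i w b (by
      simp only [mem_Ico] at hj; omega))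
  rw [split (flipT i w), split w, cnt_flip_le i w b (le_refl i), hmid]
  ring

/-- discrete intermediate value theorem, descending version. -/
lemma ivt (f : ℕ → ℤ) (M : ℕ) (c : ℤ)
    (hstep : ∀ i < M, f (i+1) = f i + 1 ∨ f (i+1) = f i - 1)
    (h0 : c ≤ f 0) (hM : f M ≤ c) : ∃ i ≤ M, f i = c := by
  induction M with
  | zero => exact ⟨0, le_refl _, le_antisymm hM h0⟩
  | succ M ih =>
    by_cases h : f M ≤ c
    · obtain ⟨i, hi, hfi⟩ := ih (fun i hi => hstep i (by omega)) h
      exact ⟨i, by omega, hfi⟩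
    · push_neg at h
      rcases hstep M (by omega) with h1 | h1 <;>
        exact ⟨M+1, le_refl _, by linarith⟩

/-- counting binary words with a prescribed number of `true`s. -/
lemma card_words (N r : ℕ) :
    Nat.card {w : Fin N → Bool // (Finset.univ.filter (fun j => w j = true)).card = r}
      = N.choose r := by
  rw [Nat.card_eq_fintype_card]
  let e : {w : Fin N → Bool // (Finset.univ.filter (fun j => w j = true)).card = r} ≃
      {s : Finset (Fin N) // s.card = r} :=
    { toFun := fun w => ⟨Finset.univ.filter (fun j => w.1 j = true), w.2⟩
      invFun := fun s => ⟨fun j => decide (j ∈ s.1), by simp [s.2]⟩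
      left_inv := fun w => Subtype.ext (funext fun j => by simp)
      right_inv := fun s => Subtype.ext (by ext j; simp) }
  rw [Fintype.card_congr e, Fintype.card_finset_len, Fintype.card_fin]

end ReflAux

open ReflAux

/-- reflection count: for `k ≤ n ≤ m + k`, the number of monotone
lattice paths from `(0,0)` to `(m,n)` that touch the line `y = x + k` is
`C(m+n, n-k)`. -/
theorem bad_paths_count (k m n : ℕ) (hkn : k ≤ n) (hnm : n ≤ m + k) :
    Nat.card {w : Fin (m + n) → Bool //
        (Finset.univ.filter (fun j => w j = true)).card = n ∧ TouchesLine m n k w}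
      = (m + n).choose (n - k) := by
  classical
  set N := m + n with hNdef
  -- predicates for first-touch indices
  -- forward: touching from below (true-count exceeds false-count by k)
  -- backward: dual
  have touch_iff : ∀ w : Fin N → Bool, TouchesLine m n k w ↔
      ∃ i, i ≤ N ∧ cnt w true i = cnt w false i + k := by
    intro w
    constructor
    · rintro ⟨i, hi, hc⟩
      exact ⟨i, hi, by rwa [cnt_eq_card w true hi, cnt_eq_card w false hi] at hc⟩
    · rintro ⟨i, hi, hc⟩
      exact ⟨i, hi, by rwa [cnt_eq_card w true hi, cnt_eq_card w false hi]⟩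
  -- existence of dual touch for words with n - k trues
  have dual_exists : ∀ v : Fin N → Bool, cnt v true N = n - k →
      ∃ i, i ≤ N ∧ cnt v false i = cnt v true i + k := by
    intro v hv
    have htot := cnt_add v (le_refl N)
    have hfN : cnt v false N = m + k := by omega
    have hstep : ∀ i < N, (fun i => (cnt v true i : ℤ) - cnt v false i) (i+1) =
        (fun i => (cnt v true i : ℤ) - cnt v false i) i + 1 ∨
        (fun i => (cnt v true i : ℤ) - cnt v false i) (i+1) =
        (fun i => (cnt v true i : ℤ) - cnt v false i) i - 1 := by
      intro i hi
      simp only [cnt_succ]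
      have := ind_add v hi
      have h1 := ind_le_one v true i
      have h2 := ind_le_one v false i
      push_cast
      omega
    have h0 : (-(k:ℤ)) ≤ (cnt v true 0 : ℤ) - cnt v false 0 := by
      simp only [cnt, Finset.range_zero, Finset.sum_empty]
      omega
    have hM : (cnt v true N : ℤ) - cnt v false N ≤ -(k:ℤ) := by
      rw [hv, hfN]; push_cast; omega
    obtain ⟨i, hi, hfi⟩ := ivt (fun i => (cnt v true i : ℤ) - cnt v false i) N (-(k:ℤ))
      hstep h0 hM
    refine ⟨i, hi, ?_⟩
    have hle : cnt v true i + cnt v false i = i := cnt_add v hi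
    omega
  -- the forward first-touch index
  let P : (Fin N → Bool) → ℕ → Prop := fun w i => i ≤ N ∧ cnt w true i = cnt w false i + k
  let Q : (Fin N → Bool) → ℕ → Prop := fun v i => i ≤ N ∧ cnt v false i = cnt v true i + k
  have hPdec : ∀ w, DecidablePred (P w) := fun w i => by unfold P; infer_instance
  have hQdec : ∀ v, DecidablePred (Q v) := fun v i => by unfold Q; infer_instance
  -- build the equivalence
  let A := {w : Fin N → Bool //
      (Finset.univ.filter (fun j => w j = true)).card = n ∧ TouchesLine m n k w}
  let B := {v : Fin N → Bool // (Finset.univ.filter (fun j => v j = true)).card = n - k}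
  have hcA : ∀ w : A, ∃ i, P w.1 i := by
    intro w
    obtain ⟨i, hi, hc⟩ := (touch_iff w.1).1 w.2.2
    exact ⟨i, hi, hc⟩
  have hcB : ∀ v : B, ∃ i, Q v.1 i := by
    intro v
    have := dual_exists v.1 (by rw [← card_true_eq_cnt]; exact v.2)
    obtain ⟨i, hi, hc⟩ := this
    exact ⟨i, hi, hc⟩
  -- forward map
  have fwd_mem : ∀ (w : A), (Finset.univ.filter
      (fun j => flipT (@Nat.find _ (hPdec w.1) (hcA w)) w.1 j = true)).card = n - k := by
    intro w
    have hfind := @Nat.find_spec _ (hPdec w.1) (hcA w)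
    set i := @Nat.find _ (hPdec w.1) (hcA w) with hidef
    obtain ⟨hiN, hc⟩ := hfind
    rw [card_true_eq_cnt]
    have h1 := cnt_flip_ge i w.1 true hiN
    have h2 : cnt w.1 true N = n := by rw [← card_true_eq_cnt]; exact w.2.1
    simp only [Bool.not_true] at h1
    omega
  have bwd_mem : ∀ (v : B), (Finset.univ.filter
      (fun j => flipT (@Nat.find _ (hQdec v.1) (hcB v)) v.1 j = true)).card = n ∧
      TouchesLine m n k (flipT (@Nat.find _ (hQdec v.1) (hcB v)) v.1) := by
    intro v
    have hfind := @Nat.find_spec _ (hQdec v.1) (hcB v)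
    set i := @Nat.find _ (hQdec v.1) (hcB v) with hidef
    obtain ⟨hiN, hc⟩ := hfind
    have h2 : cnt v.1 true N = n - k := by rw [← card_true_eq_cnt]; exact v.2
    constructor
    · rw [card_true_eq_cnt]
      have h1 := cnt_flip_ge i v.1 true hiN
      simp only [Bool.not_true] at h1
      omega
    · rw [touch_iff]
      refine ⟨i, hiN, ?_⟩
      rw [cnt_flip_le i v.1 true (le_refl i), cnt_flip_le i v.1 false (le_refl i)]
      simpa using hc
  -- the key first-touch preservation
  have find_bwd_fwd : ∀ (v : B) (h : ∃ i, P (flipT (@Nat.find _ (hQdec v.1) (hcB v)) v.1) i),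
      @Nat.find _ (hPdec _) h = @Nat.find _ (hQdec v.1) (hcB v) := by
    intro v h
    set i := @Nat.find _ (hQdec v.1) (hcB v) with hidef
    obtain ⟨hiN, hc⟩ := @Nat.find_spec _ (hQdec v.1) (hcB v)
    apply le_antisymm
    · apply Nat.find_le
      refine ⟨hiN, ?_⟩
      rw [cnt_flip_le i v.1 true (le_refl i), cnt_flip_le i v.1 false (le_refl i)]
      simpa using hc
    · by_contra hlt
      push_neg at hlt
      set j := @Nat.find _ (hPdec _) h with hjdef
      obtain ⟨hjN, hcj⟩ := @Nat.find_spec _ (hPdec _) h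
      rw [cnt_flip_le i v.1 true (le_of_lt hlt), cnt_flip_le i v.1 false (le_of_lt hlt)] at hcj
      simp only [Bool.not_true, Bool.not_false] at hcj
      exact @Nat.find_min _ (hQdec v.1) (hcB v) j hlt ⟨hjN, hcj⟩
  have find_fwd_bwd : ∀ (w : A) (h : ∃ i, Q (flipT (@Nat.find _ (hPdec w.1) (hcA w)) w.1) i),
      @Nat.find _ (hQdec _) h = @Nat.find _ (hPdec w.1) (hcA w) := by
    intro w h
    set i := @Nat.find _ (hPdec w.1) (hcA w) with hidef
    obtain ⟨hiN, hc⟩ := @Nat.find_spec _ (hPdec w.1) (hcA w)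
    apply le_antisymm
    · apply Nat.find_le
      refine ⟨hiN, ?_⟩
      rw [cnt_flip_le i w.1 true (le_refl i), cnt_flip_le i w.1 false (le_refl i)]
      simpa using hc
    · by_contra hlt
      push_neg at hlt
      set j := @Nat.find _ (hQdec _) h with hjdef
      obtain ⟨hjN, hcj⟩ := @Nat.find_spec _ (hQdec _) h
      rw [cnt_flip_le i w.1 true (le_of_lt hlt), cnt_flip_le i w.1 false (le_of_lt hlt)] at hcj
      simp only [Bool.not_true, Bool.not_false] at hcj
      exact @Nat.find_min _ (hPdec w.1) (hcA w) j hlt ⟨hjN, hcj⟩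
  let e : A ≃ B :=
    { toFun := fun w => ⟨flipT (@Nat.find _ (hPdec w.1) (hcA w)) w.1, fwd_mem w⟩
      invFun := fun v => ⟨flipT (@Nat.find _ (hQdec v.1) (hcB v)) v.1, bwd_mem v⟩
      left_inv := by
        intro w
        apply Subtype.ext
        show flipT _ (flipT (@Nat.find _ (hPdec w.1) (hcA w)) w.1) = w.1
        have := find_fwd_bwd w (hcB ⟨flipT (@Nat.find _ (hPdec w.1) (hcA w)) w.1, fwd_mem w⟩)
        rw [this, flipT_flipT]
      right_inv := by
        intro v
        apply Subtype.ext
        show flipT _ (flipT (@Nat.find _ (hQdec v.1) (hcB v)) v.1) = v.1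
        have := find_bwd_fwd v (hcA ⟨flipT (@Nat.find _ (hQdec v.1) (hcB v)) v.1, bwd_mem v⟩)
        rw [this, flipT_flipT] }
  rw [Nat.card_congr e]
  exact card_words N (n - k)
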